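/- The Links-Gould invariant of the trefoil knot 3_1: cl(sigma^3) = (1 + p^-4 - p^-2 + 2 q^2 - p^-2 q^2 - p^2 q^2 - p^2 q^4 + p^4 q^4) I4, where sigma^3 is the matrix cube of sigma and I4 is the 4x4 identity matrix over R. -/

import Mathlib

open Matrix Kronecker

/-- The elementary 16×16 matrix with entry `v` in row `(a,b)` and column `(c,d)`,
rows and columns indexed by `Fin 4 × Fin 4` (Kronecker product convention;
the index `i ∈ {1,…,4}` of the paper corresponds to `i - 1 ∈ Fin 4`). -/
def lgE {R : Type*} [CommRing R] (a b c d : Fin 4) (v : R) :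
    Matrix (Fin 4 × Fin 4) (Fin 4 × Fin 4) R :=
  Matrix.single (a, b) (c, d) v

/-- The Links–Gould braiding `σ`, where `qi, pi` denote the inverses of `q, p`
and `Y ^ 2 = p⁻² - q² + p²q² - 1`. -/
def LGsigma {R : Type*} [CommRing R] (q p qi pi Y : R) :
    Matrix (Fin 4 × Fin 4) (Fin 4 × Fin 4) R :=
  lgE 0 0 0 0 (pi ^ 2)
    + lgE 0 1 1 0 pi + lgE 1 0 0 1 pi + lgE 0 2 2 0 pi + lgE 2 0 0 2 pi
    + lgE 0 3 3 0 1 + lgE 3 0 0 3 1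
    + lgE 1 0 1 0 (pi ^ 2 - 1) + lgE 2 0 2 0 (pi ^ 2 - 1)
    + lgE 1 1 1 1 (-1) + lgE 2 2 2 2 (-1)
    + lgE 1 2 1 2 (q ^ 2 - 1)
    + lgE 1 2 2 1 (-q) + lgE 2 1 1 2 (-q)
    + lgE 1 2 3 0 (-(q * Y)) + lgE 3 0 1 2 (-(q * Y))
    + lgE 2 1 3 0 Y + lgE 3 0 2 1 Y
    + lgE 3 0 3 0 (Y ^ 2)
    + lgE 1 3 3 1 (p * q) + lgE 3 1 1 3 (p * q)
    + lgE 2 3 3 2 (p * q) + lgE 3 2 2 3 (p * q)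
    + lgE 3 1 3 1 (p ^ 2 * q ^ 2 - 1) + lgE 3 2 3 2 (p ^ 2 * q ^ 2 - 1)
    + lgE 3 3 3 3 (p ^ 2 * q ^ 2)

/-- The matrix `σ̄` (the inverse braiding). -/
def LGsigmabar {R : Type*} [CommRing R] (q p qi pi Y : R) :
    Matrix (Fin 4 × Fin 4) (Fin 4 × Fin 4) R :=
  lgE 0 0 0 0 (p ^ 2)
    + lgE 0 1 0 1 (p ^ 2 - 1) + lgE 0 2 0 2 (p ^ 2 - 1)
    + lgE 0 1 1 0 p + lgE 1 0 0 1 p + lgE 0 2 2 0 p + lgE 2 0 0 2 p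
    + lgE 0 3 0 3 (Y ^ 2 * qi ^ 2)
    + lgE 0 3 1 2 (Y * qi) + lgE 1 2 0 3 (Y * qi)
    + lgE 0 3 2 1 (-(Y * qi ^ 2)) + lgE 2 1 0 3 (-(Y * qi ^ 2))
    + lgE 0 3 3 0 1 + lgE 3 0 0 3 1
    + lgE 1 1 1 1 (-1) + lgE 2 2 2 2 (-1)
    + lgE 1 2 2 1 (-qi) + lgE 2 1 1 2 (-qi)
    + lgE 2 1 2 1 (qi ^ 2 - 1)
    + lgE 1 3 1 3 (pi ^ 2 * qi ^ 2 - 1) + lgE 2 3 2 3 (pi ^ 2 * qi ^ 2 - 1)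
    + lgE 1 3 3 1 (pi * qi) + lgE 3 1 1 3 (pi * qi)
    + lgE 2 3 3 2 (pi * qi) + lgE 3 2 2 3 (pi * qi)
    + lgE 3 3 3 3 (pi ^ 2 * qi ^ 2)

/-- The diagonal matrix `D = diag(p², -p²q², -p², p²q²)`, as a function on `Fin 4`. -/
def LGD {R : Type*} [CommRing R] (q p : R) : Fin 4 → R :=
  ![p ^ 2, -(p ^ 2 * q ^ 2), -(p ^ 2), p ^ 2 * q ^ 2]

/-- Quantum closure of the second strand of a two-strand tensor. -/
def lgcl2 {R : Type*} [CommRing R] (D : Fin 4 → R)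
    (M : Matrix (Fin 4 × Fin 4) (Fin 4 × Fin 4) R) : Matrix (Fin 4) (Fin 4) R :=
  Matrix.of fun y x => ∑ a : Fin 4, M (y, a) (x, a) * D a

/-- Quantum closure of the second and third strands of a three-strand tensor. -/
def lgcl3 {R : Type*} [CommRing R] (D : Fin 4 → R)
    (M : Matrix (Fin 4 × Fin 4 × Fin 4) (Fin 4 × Fin 4 × Fin 4) R) :
    Matrix (Fin 4) (Fin 4) R :=
  Matrix.of fun y x => ∑ a : Fin 4, ∑ b : Fin 4, M (y, a, b) (x, a, b) * D a * D b

/-- Quantum closure of the second, third and fourth strands of a four-strand tensor. -/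
def lgcl4 {R : Type*} [CommRing R] (D : Fin 4 → R)
    (M : Matrix (Fin 4 × Fin 4 × Fin 4 × Fin 4) (Fin 4 × Fin 4 × Fin 4 × Fin 4) R) :
    Matrix (Fin 4) (Fin 4) R :=
  Matrix.of fun y x =>
    ∑ a : Fin 4, ∑ b : Fin 4, ∑ c : Fin 4, M (y, a, b, c) (x, a, b, c) * D a * D b * D c

/-- `S ⊗ I₄` acting on the first two of three strands (Kronecker product,
reindexed along the canonical associativity equivalence). -/
def lgB1 {R : Type*} [CommRing R] (S : Matrix (Fin 4 × Fin 4) (Fin 4 × Fin 4) R) :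
    Matrix (Fin 4 × Fin 4 × Fin 4) (Fin 4 × Fin 4 × Fin 4) R :=
  Matrix.reindex (Equiv.prodAssoc (Fin 4) (Fin 4) (Fin 4))
    (Equiv.prodAssoc (Fin 4) (Fin 4) (Fin 4)) (S ⊗ₖ (1 : Matrix (Fin 4) (Fin 4) R))

/-- `I₄ ⊗ S` acting on the last two of three strands. -/
def lgB2 {R : Type*} [CommRing R] (S : Matrix (Fin 4 × Fin 4) (Fin 4 × Fin 4) R) :
    Matrix (Fin 4 × Fin 4 × Fin 4) (Fin 4 × Fin 4 × Fin 4) R :=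
  (1 : Matrix (Fin 4) (Fin 4) R) ⊗ₖ S

/-- `S ⊗ I₁₆` acting on the first two of four strands. -/
def lgC1 {R : Type*} [CommRing R] (S : Matrix (Fin 4 × Fin 4) (Fin 4 × Fin 4) R) :
    Matrix (Fin 4 × Fin 4 × Fin 4 × Fin 4) (Fin 4 × Fin 4 × Fin 4 × Fin 4) R :=
  Matrix.reindex (Equiv.prodAssoc (Fin 4) (Fin 4) (Fin 4 × Fin 4))
    (Equiv.prodAssoc (Fin 4) (Fin 4) (Fin 4 × Fin 4))
    (S ⊗ₖ (1 : Matrix (Fin 4 × Fin 4) (Fin 4 × Fin 4) R))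

/-- `I₄ ⊗ S ⊗ I₄` acting on the middle two of four strands. -/
def lgC2 {R : Type*} [CommRing R] (S : Matrix (Fin 4 × Fin 4) (Fin 4 × Fin 4) R) :
    Matrix (Fin 4 × Fin 4 × Fin 4 × Fin 4) (Fin 4 × Fin 4 × Fin 4 × Fin 4) R :=
  (1 : Matrix (Fin 4) (Fin 4) R) ⊗ₖ lgB1 S

/-- `I₁₆ ⊗ S` acting on the last two of four strands. -/
def lgC3 {R : Type*} [CommRing R] (S : Matrix (Fin 4 × Fin 4) (Fin 4 × Fin 4) R) :
    Matrix (Fin 4 × Fin 4 × Fin 4 × Fin 4) (Fin 4 × Fin 4 × Fin 4 × Fin 4) R :=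
  (1 : Matrix (Fin 4) (Fin 4) R) ⊗ₖ lgB2 S

set_option maxHeartbeats 4000000 in
/-- the Links–Gould invariant of the trefoil knot `3₁`:
`cl(σ³) = (1 + p⁻⁴ - p⁻² + 2q² - p⁻²q² - p²q² - p²q⁴ + p⁴q⁴) I₄`. -/
theorem LG_trefoil (R : Type*) [CommRing R] (q p qi pi Y : R)
    (hq : q * qi = 1) (hp : p * pi = 1)
    (hY : Y ^ 2 = pi ^ 2 - q ^ 2 + p ^ 2 * q ^ 2 - 1) :
    lgcl2 (LGD q p) (LGsigma q p qi pi Y ^ 3) =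
      (1 + pi ^ 4 - pi ^ 2 + 2 * q ^ 2 - pi ^ 2 * q ^ 2 - p ^ 2 * q ^ 2
          - p ^ 2 * q ^ 4 + p ^ 4 * q ^ 4) • (1 : Matrix (Fin 4) (Fin 4) R) := by
  ext i j
  fin_cases i <;> fin_cases j <;>
    simp [lgcl2, LGD, pow_succ, Matrix.mul_apply, Fintype.sum_prod_type, Fin.sum_univ_four,
      LGsigma, lgE, Matrix.single, Prod.ext_iff, Matrix.smul_apply, Matrix.one_apply] <;>
    first
    | ring1
    | linear_combination (q^2*p^2) * hY + (1 - pi^2 + pi^4 + p*pi - p*pi^3 + p*pi^5 + 2*q^2 - q^2*pi^2 + 2*q^2*p*pi - q^2*p*pi^3) * hp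
    | linear_combination (q^2*p^2 - q^2*p^2*Y^2 - q^2*p^2*pi^2 - q^4*p^2 - q^4*p^4) * hY
        + (1 - pi^2 + pi^4 + p*pi - p*pi^3 + p*pi^5 + 2*q^2 - q^2*pi^2 + 2*q^2*p*pi - q^2*p*pi^3 - 2*q^4*p^2 - 2*q^4*p^3*pi) * hp
    | linear_combination (p^2 + p^2*Y^2 + p^2*Y^4 + p^2*pi^2*Y^2 + p^2*pi^4 - q^2*p^2
          + q^2*p^2*Y^2 + q^2*p^4*Y^2 + 2*q^2*p^4*pi^2 + q^4*p^6) * hY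
        + (1 - pi^2 + pi^4 + p*pi - p*pi^3 + p*pi^5 + 2*q^2 - q^2*pi^2 + 2*q^2*p*pi - q^2*p*pi^3 - 2*q^2*p^2 + 3*q^2*p^2*pi^2 - 2*q^2*p^3*pi + 3*q^2*p^3*pi^3
          - 2*q^4*p^2 - 2*q^4*p^3*pi + 3*q^4*p^4 + 3*q^4*p^5*pi) * hp
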